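/- For nonnegative integers n,k, ∑_{π ∈ P(n,k)} w^{rlmin(π)} q^{inv(π)} = [n choose k]_q · [n]_{w,q}[n-1]_{w,q}⋯[k+1]_{w,q}, where [m]_{w,q} = w + q + q² + ⋯ + q^{m-1}. -/

import Mathlib

namespace PP

def isPP {n : ℕ} (M : Fin n → Fin n → Bool) : Prop :=
  (∀ i j j', M i j = true → M i j' = true → j = j') ∧
  (∀ i i' j, M i j = true → M i' j = true → i = i')

def zeroRows {n : ℕ} (M : Fin n → Fin n → Bool) : ℕ :=
  (Finset.univ.filter (fun i : Fin n => ∀ j, M i j = false)).card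

def invStat {n : ℕ} (M : Fin n → Fin n → Bool) : ℕ :=
  (Finset.univ.filter (fun p : Fin n × Fin n =>
    M p.1 p.2 = false ∧ (∀ j' < p.2, M p.1 j' = false) ∧ (∀ i' < p.1, M i' p.2 = false) ∧
    ((∃ j', M p.1 j' = true) ∨ (∃ i', M i' p.2 = true)))).card

def rlminStat {n : ℕ} (M : Fin n → Fin n → Bool) : ℕ :=
  (Finset.univ.filter (fun p : Fin n × Fin n =>
    M p.1 p.2 = true ∧ ∀ l < p.2, ∃ i' < p.1, M i' l = true)).card

def excStat {n : ℕ} (M : Fin n → Fin n → Bool) : ℕ :=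
  (Finset.univ.filter (fun p : Fin n × Fin n => M p.1 p.2 = true ∧ p.1 < p.2)).card

def wexStat {n : ℕ} (M : Fin n → Fin n → Bool) : ℕ :=
  (Finset.univ.filter (fun p : Fin n × Fin n => M p.1 p.2 = true ∧ p.1 ≤ p.2)).card

def reachN {n : ℕ} (M : Fin n → Fin n → Bool) : ℕ → Fin n → Fin n → Prop
  | 0, i, j => i = j
  | m+1, i, j => ∃ l, M i l = true ∧ reachN M m l j

noncomputable def cycStat {n : ℕ} (M : Fin n → Fin n → Bool) : ℕ :=
  Nat.card {i : Fin n // (∃ m, 0 < m ∧ reachN M m i i) ∧ ∀ j, (∃ m, reachN M m i j) → j ≤ i}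

def fixStat {n : ℕ} (M : Fin n → Fin n → Bool) : ℕ :=
  (Finset.univ.filter (fun i : Fin n => M i i = true)).card

noncomputable def cycGe2Stat {n : ℕ} (M : Fin n → Fin n → Bool) : ℕ :=
  Nat.card {i : Fin n // (∃ m, 0 < m ∧ reachN M m i i) ∧ (∀ j, (∃ m, reachN M m i j) → j ≤ i) ∧ M i i = false}

def Conn {n : ℕ} (M : Fin n → Fin n → Bool) : Prop :=
  ∀ i : ℕ, 0 < i → i < n → ∃ r : Fin n, r.1 < i ∧ ∀ c : Fin n, c.1 < i → M r c = false

def UpDownFrom {n : ℕ} (M : Fin n → Fin n → Bool) (i : Fin n) : Prop :=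
  ∀ (m : ℕ) (a b : Fin n),
    (∀ m', 1 ≤ m' → m' ≤ m + 1 → ¬ reachN M m' i i) →
    reachN M m i a → M a b = true →
    ((Even m → a < b) ∧ (¬ Even m → b < a))

def CUD {n : ℕ} (M : Fin n → Fin n → Bool) : Prop :=
  (∀ i : Fin n,
      ((∃ m, 0 < m ∧ reachN M m i i) ∧ ∀ j, (∃ m, reachN M m i j) → i ≤ j) →
      UpDownFrom M i) ∧
  (∀ i : Fin n, (∀ i', M i' i = false) → UpDownFrom M i)

def desStat {n : ℕ} (M : Fin n → Fin n → Bool) : ℕ :=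
  (Finset.univ.filter (fun p : Fin n × Fin n =>
      M p.1 p.2 = true ∧ ∃ h : p.1.1 + 1 < n, ∃ b : Fin n, M ⟨p.1.1 + 1, h⟩ b = true ∧ b < p.2)).card
  + (Finset.univ.filter (fun p : Fin n =>
      (∀ j, M p j = false) ∧ ∃ _h : 0 < p.1, ∃ a j : Fin n,
        M ⟨p.1 - 1, Nat.lt_of_le_of_lt (Nat.sub_le _ _) p.isLt⟩ a = true ∧
        (∀ i, M i j = false) ∧
        (Finset.univ.filter (fun m : Fin n => (∀ i, M i m = false) ∧ m < j)).card
          = (Finset.univ.filter (fun r : Fin n => (∀ c, M r c = false) ∧ r < p)).card ∧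
        j < a)).card

def gbinom {R : Type*} [CommRing R] (q : R) : ℕ → ℕ → R
  | _, 0 => 1
  | 0, _+1 => 0
  | n+1, k+1 => gbinom q n k + q ^ (k+1) * gbinom q n (k+1)

end PP


noncomputable def w4 : MvPolynomial (Fin 2) ℤ := MvPolynomial.X 0
noncomputable def q4 : MvPolynomial (Fin 2) ℤ := MvPolynomial.X 1

/-- `[m]_{w,q} = w + q + ⋯ + q^{m-1}`, with `[0]_{w,q} = 0`. -/
noncomputable def wqNum (m : ℕ) : MvPolynomial (Fin 2) ℤ :=
  if m = 0 then 0 else w4 + ∑ i ∈ Finset.Ico 1 m, q4 ^ i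

namespace Aux
open Finset

noncomputable local instance (priority := 0) : ∀ (p : Prop), Decidable p := Classical.propDecidable

abbrev R4 := MvPolynomial (Fin 2) ℤ

/-- rectangular partial permutation condition -/
def pp {r n : ℕ} (M : Fin r → Fin n → Bool) : Prop :=
  (∀ i j j', M i j = true → M i j' = true → j = j') ∧
  (∀ i i' j, M i j = true → M i' j = true → i = i')

def zr {r n : ℕ} (M : Fin r → Fin n → Bool) : ℕ :=
  (Finset.univ.filter (fun i : Fin r => ∀ j, M i j = false)).card

def iv {r n : ℕ} (M : Fin r → Fin n → Bool) : ℕ :=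
  (Finset.univ.filter (fun p : Fin r × Fin n =>
    M p.1 p.2 = false ∧ (∀ j' < p.2, M p.1 j' = false) ∧ (∀ i' < p.1, M i' p.2 = false) ∧
    ((∃ j', M p.1 j' = true) ∨ (∃ i', M i' p.2 = true)))).card

def rl {r n : ℕ} (M : Fin r → Fin n → Bool) : ℕ :=
  (Finset.univ.filter (fun p : Fin r × Fin n =>
    M p.1 p.2 = true ∧ ∀ l < p.2, ∃ i' < p.1, M i' l = true)).card

/-- number of free (empty) columns strictly left of `c` -/
def rk {r n : ℕ} (M : Fin r → Fin n → Bool) (c : Fin n) : ℕ :=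
  (Finset.univ.filter (fun b : Fin n => b < c ∧ ∀ i, M i b = false)).card

section helpers
variable {r : ℕ}

lemma castSucc_of_lt_last {x : Fin (r+1)} (h : x < Fin.last r) :
    ∃ y : Fin r, y.castSucc = x := by
  refine ⟨⟨x.1, h⟩, ?_⟩
  apply Fin.ext
  rfl

lemma forall_lt_castSucc (a : Fin r) (P : Fin (r+1) → Prop) :
    (∀ x < Fin.castSucc a, P x) ↔ ∀ y < a, P y.castSucc := by
  constructor
  · intro h y hy
    exact h _ (Fin.castSucc_lt_castSucc_iff.2 hy)
  · intro h x hx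
    obtain ⟨y, rfl⟩ := castSucc_of_lt_last (lt_of_lt_of_le hx (Fin.le_last _))
    exact h y (Fin.castSucc_lt_castSucc_iff.1 hx)

lemma exists_lt_castSucc (a : Fin r) (P : Fin (r+1) → Prop) :
    (∃ x < Fin.castSucc a, P x) ↔ ∃ y < a, P y.castSucc := by
  constructor
  · rintro ⟨x, hx, hP⟩
    obtain ⟨y, rfl⟩ := castSucc_of_lt_last (lt_of_lt_of_le hx (Fin.le_last _))
    exact ⟨y, Fin.castSucc_lt_castSucc_iff.1 hx, hP⟩
  · rintro ⟨y, hy, hP⟩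
    exact ⟨y.castSucc, Fin.castSucc_lt_castSucc_iff.2 hy, hP⟩

lemma forall_lt_last (P : Fin (r+1) → Prop) :
    (∀ x < Fin.last r, P x) ↔ ∀ y : Fin r, P y.castSucc := by
  constructor
  · intro h y; exact h _ (Fin.castSucc_lt_last y)
  · intro h x hx
    obtain ⟨y, rfl⟩ := castSucc_of_lt_last hx
    exact h y

lemma exists_lt_last (P : Fin (r+1) → Prop) :
    (∃ x < Fin.last r, P x) ↔ ∃ y : Fin r, P y.castSucc := by
  constructor
  · rintro ⟨x, hx, hP⟩
    obtain ⟨y, rfl⟩ := castSucc_of_lt_last hx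
    exact ⟨y, hP⟩
  · rintro ⟨y, hP⟩
    exact ⟨y.castSucc, Fin.castSucc_lt_last y, hP⟩

lemma exists_fin_last (P : Fin (r+1) → Prop) :
    (∃ x : Fin (r+1), P x) ↔ (∃ y : Fin r, P y.castSucc) ∨ P (Fin.last r) := by
  constructor
  · rintro ⟨x, hP⟩
    rcases lt_or_eq_of_le (Fin.le_last x) with h | h
    · obtain ⟨y, rfl⟩ := castSucc_of_lt_last h
      exact Or.inl ⟨y, hP⟩
    · subst h; exact Or.inr hP
  · rintro (⟨y, hP⟩ | hP)
    · exact ⟨_, hP⟩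
    · exact ⟨_, hP⟩

end helpers

lemma card_filter_prod {α β : Type*} [Fintype α] [Fintype β] (p : α × β → Prop) :
    ((univ : Finset (α × β)).filter p).card
      = ∑ a : α, ((univ : Finset β).filter (fun b => p (a, b))).card := by
  simp only [Finset.card_filter]
  rw [Fintype.sum_prod_type]

abbrev ivp {r n : ℕ} (M : Fin r → Fin n → Bool) (p : Fin r × Fin n) : Prop :=
  M p.1 p.2 = false ∧ (∀ j' < p.2, M p.1 j' = false) ∧ (∀ i' < p.1, M i' p.2 = false) ∧
    ((∃ j', M p.1 j' = true) ∨ (∃ i', M i' p.2 = true))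

abbrev rlp {r n : ℕ} (M : Fin r → Fin n → Bool) (p : Fin r × Fin n) : Prop :=
  M p.1 p.2 = true ∧ ∀ l < p.2, ∃ i' < p.1, M i' l = true

lemma iv_eq {r n : ℕ} (M : Fin r → Fin n → Bool) :
    iv M = ∑ i : Fin r, ∑ b : Fin n, if ivp M (i, b) then 1 else 0 := by
  unfold iv
  rw [Finset.card_filter, Fintype.sum_prod_type]

lemma rl_eq {r n : ℕ} (M : Fin r → Fin n → Bool) :
    rl M = ∑ i : Fin r, ∑ b : Fin n, if rlp M (i, b) then 1 else 0 := by
  unfold rl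
  rw [Finset.card_filter, Fintype.sum_prod_type]

lemma zr_eq {r n : ℕ} (M : Fin r → Fin n → Bool) :
    zr M = ∑ i : Fin r, if (∀ j, M i j = false) then 1 else 0 := by
  unfold zr
  rw [Finset.card_filter]

section snoc
variable {r n : ℕ} (M' : Fin r → Fin n → Bool)

/-- empty last row -/
def vF : Fin n → Bool := fun _ => false
/-- last row with single 1 at column c -/
def vC (c : Fin n) : Fin n → Bool := fun j => decide (c = j)

lemma pp_snoc_none : pp (Fin.snoc M' (vF (n := n))) ↔ pp M' := by
  unfold pp
  constructor
  · rintro ⟨h1, h2⟩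
    refine ⟨fun i j j' a b => h1 i.castSucc j j' ?_ ?_,
      fun i i' j a b => Fin.castSucc_injective _ (h2 i.castSucc i'.castSucc j ?_ ?_)⟩ <;>
      simpa [Fin.snoc_castSucc]
  · rintro ⟨h1, h2⟩
    constructor
    · intro i
      induction i using Fin.lastCases with
      | last => intro j j' a; simp [Fin.snoc_last, vF] at a
      | cast i => intro j j' a b; rw [Fin.snoc_castSucc] at a b; exact h1 i j j' a b
    · intro i i' j
      induction i using Fin.lastCases with
      | last => intro a; simp [Fin.snoc_last, vF] at a
      | cast i =>
        induction i' using Fin.lastCases with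
        | last => intro _ b; simp [Fin.snoc_last, vF] at b
        | cast i' =>
          intro a b; rw [Fin.snoc_castSucc] at a b
          exact congrArg Fin.castSucc (h2 i i' j a b)

lemma zr_snoc_none : zr (Fin.snoc M' (vF (n := n))) = zr M' + 1 := by
  unfold zr
  rw [Finset.card_filter, Finset.card_filter, Fin.sum_univ_castSucc]
  simp [Fin.snoc_castSucc, Fin.snoc_last, vF]

lemma iv_snoc_none : iv (Fin.snoc M' (vF (n := n))) = iv M' := by
  have h1 : ∀ (i : Fin r) (b : Fin n),
      ivp (Fin.snoc M' (vF (n := n))) (i.castSucc, b) ↔ ivp M' (i, b) := by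
    intro i b
    unfold ivp
    simp only [forall_lt_castSucc, exists_fin_last, Fin.snoc_castSucc, Fin.snoc_last, vF]
    simp
  have h2 : ∀ b : Fin n, ¬ ivp (Fin.snoc M' (vF (n := n))) (Fin.last r, b) := by
    intro b h
    obtain ⟨-, -, h3, h4⟩ := h
    rw [forall_lt_last] at h3
    simp only [Fin.snoc_castSucc] at h3
    rcases h4 with ⟨j', hj'⟩ | h4
    · rw [Fin.snoc_last] at hj'
      simp [vF] at hj'
    · rw [exists_fin_last] at h4
      rcases h4 with ⟨y, hy⟩ | hy
      · rw [Fin.snoc_castSucc] at hy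
        rw [h3 y] at hy
        exact absurd hy (by simp)
      · rw [Fin.snoc_last] at hy
        simp [vF] at hy
  rw [iv_eq, iv_eq, Fin.sum_univ_castSucc]
  simp only [h1, h2, if_false, Finset.sum_const_zero, add_zero]

lemma rl_snoc_none : rl (Fin.snoc M' (vF (n := n))) = rl M' := by
  have h1 : ∀ (i : Fin r) (b : Fin n),
      rlp (Fin.snoc M' (vF (n := n))) (i.castSucc, b) ↔ rlp M' (i, b) := by
    intro i b
    unfold rlp
    simp only [exists_lt_castSucc, Fin.snoc_castSucc]
  have h2 : ∀ b : Fin n, ¬ rlp (Fin.snoc M' (vF (n := n))) (Fin.last r, b) := by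
    intro b h
    have := h.1
    rw [Fin.snoc_last] at this
    simp [vF] at this
  rw [rl_eq, rl_eq, Fin.sum_univ_castSucc]
  simp only [h1, h2, if_false, Finset.sum_const_zero, add_zero]

variable (c : Fin n)

lemma pp_snoc_some : pp (Fin.snoc M' (vC c)) ↔ (pp M' ∧ ∀ i, M' i c = false) := by
  unfold pp
  constructor
  · rintro ⟨h1, h2⟩
    refine ⟨⟨fun i j j' a b => h1 i.castSucc j j' ?_ ?_,
      fun i i' j a b => Fin.castSucc_injective _ (h2 i.castSucc i'.castSucc j ?_ ?_)⟩, ?_⟩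
    · simpa [Fin.snoc_castSucc]
    · simpa [Fin.snoc_castSucc]
    · simpa [Fin.snoc_castSucc]
    · simpa [Fin.snoc_castSucc]
    · intro i
      by_contra hic
      have hic' : M' i c = true := by
        cases h : M' i c
        · exact absurd h hic
        · rfl
      have ha : (Fin.snoc M' (vC c) : Fin (r+1) → Fin n → Bool) i.castSucc c = true := by
        rw [Fin.snoc_castSucc]; exact hic'
      have hb : (Fin.snoc M' (vC c) : Fin (r+1) → Fin n → Bool) (Fin.last r) c = true := by
        rw [Fin.snoc_last]; simp [vC]
      have := h2 i.castSucc (Fin.last r) c ha hb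
      exact absurd this (Fin.ne_last_of_lt (Fin.castSucc_lt_last i))
  · rintro ⟨⟨h1, h2⟩, hc⟩
    constructor
    · intro i
      induction i using Fin.lastCases with
      | last =>
        intro j j' a b
        rw [Fin.snoc_last] at a b
        simp only [vC, decide_eq_true_eq] at a b
        rw [← a, ← b]
      | cast i => intro j j' a b; rw [Fin.snoc_castSucc] at a b; exact h1 i j j' a b
    · intro i i' j
      induction i using Fin.lastCases with
      | last =>
        induction i' using Fin.lastCases with
        | last => intro _ _; rfl
        | cast i' =>
          intro a b
          rw [Fin.snoc_last] at a
          rw [Fin.snoc_castSucc] at b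
          simp only [vC, decide_eq_true_eq] at a
          subst a
          exact absurd b (by simp [hc i'])
      | cast i =>
        induction i' using Fin.lastCases with
        | last =>
          intro a b
          rw [Fin.snoc_castSucc] at a
          rw [Fin.snoc_last] at b
          simp only [vC, decide_eq_true_eq] at b
          subst b
          exact absurd a (by simp [hc i])
        | cast i' =>
          intro a b; rw [Fin.snoc_castSucc] at a b
          exact congrArg Fin.castSucc (h2 i i' j a b)

lemma zr_snoc_some : zr (Fin.snoc M' (vC c)) = zr M' := by
  unfold zr
  rw [Finset.card_filter, Finset.card_filter, Fin.sum_univ_castSucc]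
  have hl : ¬ (∀ j, (Fin.snoc M' (vC c) : Fin (r+1) → Fin n → Bool) (Fin.last r) j = false) := by
    intro h
    have := h c
    rw [Fin.snoc_last] at this
    simp [vC] at this
  simp [Fin.snoc_castSucc, hl]
  exact ⟨c, by simp [vC]⟩

lemma iv_snoc_some (hc : ∀ i, M' i c = false) :
    iv (Fin.snoc M' (vC c)) = iv M' + zr M' + rk M' c := by
  have hrow : ∀ i : Fin r,
      (∑ b : Fin n, if ivp (Fin.snoc M' (vC c)) (i.castSucc, b) then (1:ℕ) else 0)
      = (∑ b : Fin n, if ivp M' (i, b) then (1:ℕ) else 0)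
        + (if (∀ j, M' i j = false) then 1 else 0) := by
    intro i
    have hne : ∀ b : Fin n, b ≠ c →
        (ivp (Fin.snoc M' (vC c)) (i.castSucc, b) ↔ ivp M' (i, b)) := by
      intro b hb
      unfold ivp
      simp only [forall_lt_castSucc, exists_fin_last, Fin.snoc_castSucc, Fin.snoc_last]
      have : (vC c b = true) ↔ False := by simp [vC]; exact fun h => hb h.symm
      simp [this]
    -- characterize at b = c
    have hQ1 : ivp (Fin.snoc M' (vC c)) (i.castSucc, c) ↔ (∀ b' < c, M' i b' = false) := by
      unfold ivp
      simp only [forall_lt_castSucc, exists_fin_last, Fin.snoc_castSucc, Fin.snoc_last]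
      constructor
      · exact fun h => h.2.1
      · intro hQ
        refine ⟨hc i, hQ, fun y _ => hc y, Or.inr (Or.inr ?_)⟩
        simp [vC]
    have hQ2 : ivp M' (i, c) ↔ ((∀ b' < c, M' i b' = false) ∧ ∃ j', M' i j' = true) := by
      unfold ivp
      constructor
      · rintro ⟨-, h2, -, h4⟩
        refine ⟨h2, ?_⟩
        rcases h4 with h4 | ⟨y, hy⟩
        · exact h4
        · exact absurd hy (by simp [hc y])
      · rintro ⟨hQ, hj⟩
        exact ⟨hc i, hQ, fun y _ => hc y, Or.inl hj⟩
    have hcc : (if ivp (Fin.snoc M' (vC c)) (i.castSucc, c) then (1:ℕ) else 0)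
        = (if ivp M' (i, c) then (1:ℕ) else 0) + (if (∀ j, M' i j = false) then 1 else 0) := by
      rw [if_congr hQ1 rfl rfl, if_congr hQ2 rfl rfl]
      by_cases hE : ∀ j, M' i j = false
      · rw [if_pos hE, if_pos (fun b' _ => hE b'),
          if_neg (fun h => by obtain ⟨j', hj'⟩ := h.2; rw [hE j'] at hj'; simp at hj')]
      · have hex : ∃ j', M' i j' = true := by
          by_contra hno
          push_neg at hno
          exact hE fun j => by
            cases h : M' i j
            · rfl
            · exact absurd h (hno j)
        rw [if_neg hE]
        by_cases hQ : ∀ b' < c, M' i b' = false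
        · rw [if_pos hQ, if_pos ⟨hQ, hex⟩]
        · rw [if_neg hQ, if_neg (fun h => hQ h.1)]
    rw [Finset.sum_eq_sum_sdiff_singleton_add (Finset.mem_univ c)
        (fun b => if ivp (Fin.snoc M' (vC c)) (i.castSucc, b) then (1:ℕ) else 0),
      Finset.sum_eq_sum_sdiff_singleton_add (Finset.mem_univ c)
        (fun b => if ivp M' (i, b) then (1:ℕ) else 0)]
    rw [Finset.sum_congr rfl (fun b hb => by
      rw [if_congr (hne b (by simpa using (Finset.mem_sdiff.1 hb).2)) rfl rfl])]
    rw [hcc]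
    ring
  have hlast : (∑ b : Fin n, if ivp (Fin.snoc M' (vC c)) (Fin.last r, b) then (1:ℕ) else 0)
      = rk M' c := by
    have hiff : ∀ b : Fin n,
        ivp (Fin.snoc M' (vC c)) (Fin.last r, b) ↔ (b < c ∧ ∀ i, M' i b = false) := by
      intro b
      unfold ivp
      simp only [forall_lt_last, exists_fin_last, Fin.snoc_castSucc, Fin.snoc_last]
      constructor
      · rintro ⟨h1, h2, h3, -⟩
        have hbc : b ≠ c := by
          intro h; subst h; simp [vC] at h1
        have hncb : ¬ (c < b) := by
          intro hlt
          have := h2 c hlt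
          simp [vC] at this
        exact ⟨lt_of_le_of_ne (not_lt.1 hncb) hbc, h3⟩
      · rintro ⟨hbc, hfree⟩
        refine ⟨by simp [vC]; exact fun h => absurd h (ne_of_gt hbc), ?_, hfree,
          Or.inl ⟨c, by simp [vC]⟩⟩
        intro j' hj'
        simp only [vC, decide_eq_false_iff_not]
        intro h; subst h
        exact absurd (lt_trans hj' hbc) (lt_irrefl _)
    unfold rk
    rw [Finset.card_filter]
    apply Finset.sum_congr rfl
    intro b _
    rw [if_congr (hiff b) rfl rfl]
  rw [iv_eq, iv_eq, Fin.sum_univ_castSucc]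
  rw [Finset.sum_congr rfl (fun i _ => hrow i), hlast, Finset.sum_add_distrib, ← zr_eq]

lemma rl_snoc_some (hc : ∀ i, M' i c = false) :
    rl (Fin.snoc M' (vC c)) = rl M' + (if rk M' c = 0 then 1 else 0) := by
  have h1 : ∀ (i : Fin r) (b : Fin n),
      rlp (Fin.snoc M' (vC c)) (i.castSucc, b) ↔ rlp M' (i, b) := by
    intro i b
    unfold rlp
    simp only [exists_lt_castSucc, Fin.snoc_castSucc]
  have h2 : ∀ b : Fin n, rlp (Fin.snoc M' (vC c)) (Fin.last r, b)
      ↔ (c = b ∧ ∀ l < c, ∃ y, M' y l = true) := by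
    intro b
    unfold rlp
    simp only [exists_lt_last, Fin.snoc_castSucc, Fin.snoc_last]
    constructor
    · rintro ⟨hb, h2⟩
      simp only [vC, decide_eq_true_eq] at hb
      subst hb
      exact ⟨rfl, h2⟩
    · rintro ⟨hb, h2⟩
      subst hb
      exact ⟨by simp [vC], h2⟩
  have hT : (∀ l < c, ∃ y, M' y l = true) ↔ rk M' c = 0 := by
    unfold rk
    rw [Finset.card_eq_zero, Finset.filter_eq_empty_iff]
    constructor
    · rintro h b - ⟨hbc, hfree⟩
      obtain ⟨y, hy⟩ := h b hbc
      rw [hfree y] at hy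
      simp at hy
    · intro h l hl
      have := h (Finset.mem_univ l)
      by_contra hno
      push_neg at hno
      refine this ⟨hl, fun i => ?_⟩
      cases hi : M' i l
      · rfl
      · exact absurd hi (hno i)
  rw [rl_eq, rl_eq, Fin.sum_univ_castSucc]
  congr 1
  · apply Finset.sum_congr rfl
    intro i _
    apply Finset.sum_congr rfl
    intro b _
    rw [if_congr (h1 i b) rfl rfl]
  · rw [Finset.sum_congr rfl (fun b _ => by rw [if_congr (h2 b) rfl rfl, ite_and])]
    rw [Finset.sum_ite_eq]
    rw [if_pos (Finset.mem_univ c)]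
    rw [if_congr hT rfl rfl]

end snoc

lemma gbinom_eq_zero {R : Type*} [CommRing R] (q : R) :
    ∀ n k : ℕ, n < k → PP.gbinom q n k = 0 := by
  intro n
  induction n with
  | zero =>
    rintro (_ | k) h
    · omega
    · rfl
  | succ n IH =>
    rintro (_ | k) h
    · omega
    · show PP.gbinom q n k + q ^ (k+1) * PP.gbinom q n (k+1) = 0
      rw [IH k (by omega), IH (k+1) (by omega)]
      ring

lemma sum_rank {α : Type*} [LinearOrder α] (S : Finset α) (h : ℕ → R4) :
    ∑ c ∈ S, h ((S.filter (· < c)).card) = ∑ i ∈ range S.card, h i := by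
  have hmono : ∀ a₁ ∈ S, ∀ a₂ ∈ S, a₁ < a₂ →
      (S.filter (· < a₁)).card < (S.filter (· < a₂)).card := by
    intro a₁ h₁ a₂ h₂ hlt
    apply Finset.card_lt_card
    constructor
    · intro b hb
      rw [Finset.mem_filter] at hb ⊢
      exact ⟨hb.1, lt_trans hb.2 hlt⟩
    · intro hsub
      have := hsub (Finset.mem_filter.2 ⟨h₁, hlt⟩)
      rw [Finset.mem_filter] at this
      exact absurd this.2 (lt_irrefl _)
  have hmem : ∀ a ∈ S, (S.filter (· < a)).card ∈ range S.card := by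
    intro a ha
    rw [Finset.mem_range]
    apply Finset.card_lt_card
    constructor
    · exact Finset.filter_subset _ _
    · intro hsub
      have := hsub ha
      rw [Finset.mem_filter] at this
      exact absurd this.2 (lt_irrefl _)
  have hinj : ∀ a₁ ∈ S, ∀ a₂ ∈ S,
      (S.filter (· < a₁)).card = (S.filter (· < a₂)).card → a₁ = a₂ := by
    intro a₁ h₁ a₂ h₂ he
    rcases lt_trichotomy a₁ a₂ with hlt | heq | hlt
    · exact absurd he (Nat.ne_of_lt (hmono _ h₁ _ h₂ hlt))
    · exact heq
    · exact absurd he.symm (Nat.ne_of_lt (hmono _ h₂ _ h₁ hlt))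
  apply Finset.sum_bij (fun a _ => (S.filter (· < a)).card)
  · exact hmem
  · exact fun a₁ h₁ a₂ h₂ => hinj a₁ h₁ a₂ h₂
  · intro b hb
    obtain ⟨a, ha, he⟩ := Finset.surj_on_of_inj_on_of_card_le
      (fun a _ => (S.filter (· < a)).card) hmem (fun a₁ a₂ h₁ h₂ => hinj a₁ h₁ a₂ h₂)
      (by rw [Finset.card_range]) b hb
    exact ⟨a, ha, he.symm⟩
  · intro a _; rfl

lemma sum_range_wq (m : ℕ) :
    ∑ i ∈ range m, (if i = 0 then w4 else q4 ^ i) = wqNum m := by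
  cases m with
  | zero => simp [wqNum]
  | succ m =>
    rw [wqNum, if_neg (Nat.succ_ne_zero m), Finset.range_eq_Ico,
      Finset.sum_eq_sum_Ico_succ_bot (Nat.succ_pos m)]
    rw [if_pos rfl]
    congr 1
    apply Finset.sum_congr rfl
    intro i hi
    rw [Finset.mem_Ico] at hi
    rw [if_neg (by omega)]

/-- number of free columns -/
lemma card_free {r n : ℕ} (M' : Fin r → Fin n → Bool) (hpp : pp M') :
    ((univ : Finset (Fin n)).filter (fun c => ∀ i, M' i c = false)).card
      = n - (r - zr M') := by
  have hrows : ((univ : Finset (Fin r × Fin n)).filter (fun p => M' p.1 p.2 = true)).card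
      = ((univ : Finset (Fin r)).filter (fun i => ¬ ∀ j, M' i j = false)).card := by
    apply Finset.card_bij (fun p _ => p.1)
    · intro p hp
      rw [Finset.mem_filter] at hp ⊢
      refine ⟨Finset.mem_univ _, fun hall => ?_⟩
      rw [hall p.2] at hp
      simp at hp
    · intro p hp p' hp' he
      rw [Finset.mem_filter] at hp hp'
      have h2 : M' p.1 p'.2 = true := he ▸ hp'.2
      exact Prod.ext he (hpp.1 p.1 p.2 p'.2 hp.2 h2)
    · intro i hi
      rw [Finset.mem_filter] at hi
      have : ∃ j, M' i j = true := by
        by_contra hno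
        push_neg at hno
        exact hi.2 fun j => by
          cases h : M' i j
          · rfl
          · exact absurd h (hno j)
      obtain ⟨j, hj⟩ := this
      exact ⟨(i, j), Finset.mem_filter.2 ⟨Finset.mem_univ _, hj⟩, rfl⟩
  have hcols : ((univ : Finset (Fin r × Fin n)).filter (fun p => M' p.1 p.2 = true)).card
      = ((univ : Finset (Fin n)).filter (fun c => ¬ ∀ i, M' i c = false)).card := by
    apply Finset.card_bij (fun p _ => p.2)
    · intro p hp
      rw [Finset.mem_filter] at hp ⊢
      refine ⟨Finset.mem_univ _, fun hall => ?_⟩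
      rw [hall p.1] at hp
      simp at hp
    · intro p hp p' hp' he
      rw [Finset.mem_filter] at hp hp'
      have h2 : M' p'.1 p.2 = true := he ▸ hp'.2
      exact Prod.ext (hpp.2 p.1 p'.1 p.2 hp.2 h2) he
    · intro c hc
      rw [Finset.mem_filter] at hc
      have : ∃ i, M' i c = true := by
        by_contra hno
        push_neg at hno
        exact hc.2 fun i => by
          cases h : M' i c
          · rfl
          · exact absurd h (hno i)
      obtain ⟨i, hi⟩ := this
      exact ⟨(i, c), Finset.mem_filter.2 ⟨Finset.mem_univ _, hi⟩, rfl⟩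
  have h1 := Finset.card_filter_add_card_filter_not
    (s := (univ : Finset (Fin n))) (p := fun c => ∀ i, M' i c = false)
  have h2 := Finset.card_filter_add_card_filter_not
    (s := (univ : Finset (Fin r))) (p := fun i => ∀ j, M' i j = false)
  rw [Finset.card_univ, Fintype.card_fin] at h1 h2
  unfold zr
  omega

lemma gbinom_zero {R : Type*} [CommRing R] (q : R) (n : ℕ) : PP.gbinom q n 0 = 1 := by
  cases n <;> rfl

lemma gbinom_succ_succ {R : Type*} [CommRing R] (q : R) (n k : ℕ) :
    PP.gbinom q (n+1) (k+1) = PP.gbinom q n k + q ^ (k+1) * PP.gbinom q n (k+1) := rfl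

theorem main (n : ℕ) : ∀ r k : ℕ,
    (∑ M : Fin r → Fin n → Bool,
        if pp M ∧ zr M = k then w4 ^ rl M * q4 ^ iv M else 0)
    = PP.gbinom q4 r k * ∏ i ∈ Finset.range (r - k), wqNum (n - i) := by
  intro r
  induction r with
  | zero =>
    intro k
    have hM : ∀ M : Fin 0 → Fin n → Bool,
        (if pp M ∧ zr M = k then w4 ^ rl M * q4 ^ iv M else 0)
          = (if 0 = k then 1 else 0) := by
      intro M
      have hzr : zr M = 0 := by unfold zr; simp
      have hpp0 : pp M := ⟨fun i => i.elim0, fun i => i.elim0⟩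
      have hrl : rl M = 0 := by unfold rl; simp
      have hiv : iv M = 0 := by unfold iv; simp
      rw [hzr, hrl, hiv, if_congr (and_iff_right hpp0) rfl rfl]
      simp
    rw [Finset.sum_congr rfl (fun M _ => hM M), Finset.sum_const, Finset.card_univ,
      Fintype.card_unique, one_smul, Nat.zero_sub]
    cases k with
    | zero =>
      rw [if_pos rfl, gbinom_zero]
      simp
    | succ k =>
      rw [if_neg (fun h => Nat.succ_ne_zero k h.symm)]
      rw [show PP.gbinom q4 0 (k+1) = 0 from rfl, zero_mul]
  | succ r IH =>
    intro k
    have hbij : Function.Bijective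
        (fun Mv : (Fin r → Fin n → Bool) × (Fin n → Bool) =>
          (Fin.snoc Mv.1 Mv.2 : Fin (r+1) → Fin n → Bool)) := by
      constructor
      · rintro ⟨M1, v1⟩ ⟨M2, v2⟩ h
        have h1 : M1 = M2 := by
          funext i
          have := congrFun h i.castSucc
          simpa only [Fin.snoc_castSucc] using this
        have h2 : v1 = v2 := by
          have := congrFun h (Fin.last r)
          simpa only [Fin.snoc_last] using this
        rw [Prod.ext_iff]
        exact ⟨h1, h2⟩
      · intro M
        refine ⟨(fun i => M i.castSucc, M (Fin.last r)), ?_⟩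
        funext i
        induction i using Fin.lastCases with
        | last => simp only [Fin.snoc_last]
        | cast i => simp only [Fin.snoc_castSucc]
    rw [← Fintype.sum_bijective _ hbij _
      (fun M => if pp M ∧ zr M = k then w4 ^ rl M * q4 ^ iv M else 0) (fun x => rfl)]
    rw [Fintype.sum_prod_type]
    have hinner : ∀ M' : Fin r → Fin n → Bool,
        (∑ v : Fin n → Bool,
            if pp (Fin.snoc M' v : Fin (r+1) → Fin n → Bool)
                ∧ zr (Fin.snoc M' v : Fin (r+1) → Fin n → Bool) = k then
              w4 ^ rl (Fin.snoc M' v : Fin (r+1) → Fin n → Bool)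
                * q4 ^ iv (Fin.snoc M' v : Fin (r+1) → Fin n → Bool) else 0)
        = (if pp M' ∧ zr M' + 1 = k then w4 ^ rl M' * q4 ^ iv M' else 0)
          + (if pp M' ∧ zr M' = k then
              (w4 ^ rl M' * q4 ^ iv M') * (q4 ^ k * wqNum (n - (r - k))) else 0) := by
      intro M'
      have hsub : ∀ v ∈ (Finset.univ : Finset (Fin n → Bool)),
          v ∉ insert (vF (n := n)) (Finset.univ.image (vC (n := n))) →
          (if pp (Fin.snoc M' v : Fin (r+1) → Fin n → Bool)
              ∧ zr (Fin.snoc M' v : Fin (r+1) → Fin n → Bool) = k then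
            w4 ^ rl (Fin.snoc M' v : Fin (r+1) → Fin n → Bool)
              * q4 ^ iv (Fin.snoc M' v : Fin (r+1) → Fin n → Bool) else 0) = 0 := by
        intro v _ hv
        rw [if_neg]
        rintro ⟨⟨hrow, -⟩, -⟩
        apply hv
        by_cases he : ∀ j, v j = false
        · have : v = vF (n := n) := funext fun j => he j
          rw [this]
          exact Finset.mem_insert_self _ _
        · push_neg at he
          obtain ⟨c0, hc0⟩ := he
          have hc0' : v c0 = true := by
            cases h : v c0
            · exact absurd h hc0
            · rfl
          have hveq : v = vC c0 := by
            funext j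
            by_cases hj : v j = true
            · have hj0 : j = c0 := by
                have ha : (Fin.snoc M' v : Fin (r+1) → Fin n → Bool) (Fin.last r) j = true := by
                  rw [Fin.snoc_last]; exact hj
                have hb : (Fin.snoc M' v : Fin (r+1) → Fin n → Bool) (Fin.last r) c0 = true := by
                  rw [Fin.snoc_last]; exact hc0'
                exact hrow (Fin.last r) j c0 ha hb
              subst hj0
              rw [hj]
              simp [vC]
            · have hjf : v j = false := by
                cases h : v j
                · rfl
                · exact absurd h hj
              rw [hjf]
              have hne : j ≠ c0 := fun h => hj (h ▸ hc0')
              symm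
              simp only [vC, decide_eq_false_iff_not]
              exact fun h => hne h.symm
          rw [hveq]
          exact Finset.mem_insert_of_mem (Finset.mem_image_of_mem _ (Finset.mem_univ c0))
      rw [← Finset.sum_subset (Finset.subset_univ _) hsub]
      rw [Finset.sum_insert (by
        rw [Finset.mem_image]
        rintro ⟨c0, -, hc0⟩
        have := congrFun hc0 c0
        simp [vC, vF] at this)]
      rw [Finset.sum_image (by
        intro x _ y _ hxy
        have := congrFun hxy y
        simp [vC] at this
        exact this)]
      congr 1
      · rw [rl_snoc_none, iv_snoc_none]
        exact if_congr (and_congr (pp_snoc_none M') (by rw [zr_snoc_none])) rfl rfl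
      · have hFc : ∀ c0 : Fin n,
            (if pp (Fin.snoc M' (vC c0) : Fin (r+1) → Fin n → Bool)
                ∧ zr (Fin.snoc M' (vC c0) : Fin (r+1) → Fin n → Bool) = k then
              w4 ^ rl (Fin.snoc M' (vC c0) : Fin (r+1) → Fin n → Bool)
                * q4 ^ iv (Fin.snoc M' (vC c0) : Fin (r+1) → Fin n → Bool) else 0)
            = if (pp M' ∧ zr M' = k) ∧ (∀ i, M' i c0 = false) then
                (w4 ^ rl M' * q4 ^ iv M') * (q4 ^ k *
                  (if rk M' c0 = 0 then w4 else q4 ^ rk M' c0)) else 0 := by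
          intro c0
          have hcond : (pp (Fin.snoc M' (vC c0) : Fin (r+1) → Fin n → Bool)
              ∧ zr (Fin.snoc M' (vC c0) : Fin (r+1) → Fin n → Bool) = k)
              ↔ ((pp M' ∧ zr M' = k) ∧ (∀ i, M' i c0 = false)) := by
            rw [zr_snoc_some]
            constructor
            · rintro ⟨hp, hz⟩
              obtain ⟨hp', hfree⟩ := (pp_snoc_some M' c0).1 hp
              exact ⟨⟨hp', hz⟩, hfree⟩
            · rintro ⟨⟨hp', hz⟩, hfree⟩
              exact ⟨(pp_snoc_some M' c0).2 ⟨hp', hfree⟩, hz⟩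
          by_cases h : (pp M' ∧ zr M' = k) ∧ (∀ i, M' i c0 = false)
          · rw [if_pos h, if_pos (hcond.2 h)]
            rw [rl_snoc_some M' c0 h.2, iv_snoc_some M' c0 h.2, h.1.2]
            by_cases h0 : rk M' c0 = 0
            · rw [if_pos h0, if_pos h0, h0]
              ring
            · rw [if_neg h0, if_neg h0]
              ring
          · rw [if_neg (fun hx => h (hcond.1 hx)), if_neg h]
        rw [Finset.sum_congr rfl (fun c0 _ => hFc c0)]
        by_cases hPZ : pp M' ∧ zr M' = k
        · rw [if_pos hPZ]
          have hpt : ∀ c0 : Fin n,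
              (if (pp M' ∧ zr M' = k) ∧ (∀ i, M' i c0 = false) then
                (w4 ^ rl M' * q4 ^ iv M') * (q4 ^ k *
                  (if rk M' c0 = 0 then w4 else q4 ^ rk M' c0)) else 0)
              = if (∀ i, M' i c0 = false) then
                (w4 ^ rl M' * q4 ^ iv M') * (q4 ^ k *
                  (if rk M' c0 = 0 then w4 else q4 ^ rk M' c0)) else 0 :=
            fun c0 => if_congr ⟨fun h => h.2, fun h => ⟨hPZ, h⟩⟩ rfl rfl
          rw [Finset.sum_congr rfl (fun c0 _ => hpt c0), ← Finset.sum_filter]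
          have hrk : ∀ c0, rk M' c0
              = (((Finset.univ : Finset (Fin n)).filter (fun b => ∀ i, M' i b = false)).filter
                  (· < c0)).card := by
            intro c0
            unfold rk
            rw [Finset.filter_filter]
            congr 1
            apply Finset.filter_congr
            intro b _
            constructor
            · rintro ⟨h1, h2⟩; exact ⟨h2, h1⟩
            · rintro ⟨h1, h2⟩; exact ⟨h2, h1⟩
          rw [Finset.sum_congr rfl (fun c0 hc0 => by rw [hrk c0])]
          rw [← Finset.mul_sum, ← Finset.mul_sum]
          rw [show (∑ c0 ∈ (Finset.univ : Finset (Fin n)).filter (fun b => ∀ i, M' i b = false),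
              (if (((Finset.univ : Finset (Fin n)).filter
                    (fun b => ∀ i, M' i b = false)).filter (· < c0)).card = 0 then w4
                else q4 ^ (((Finset.univ : Finset (Fin n)).filter
                    (fun b => ∀ i, M' i b = false)).filter (· < c0)).card))
              = ∑ i ∈ range (((Finset.univ : Finset (Fin n)).filter
                  (fun b => ∀ i, M' i b = false)).card), (if i = 0 then w4 else q4 ^ i)
            from sum_rank ((Finset.univ : Finset (Fin n)).filter (fun b => ∀ i, M' i b = false))
              (fun i => if i = 0 then w4 else q4 ^ i)]
          rw [sum_range_wq, card_free M' hPZ.1, hPZ.2]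
        · rw [if_neg hPZ]
          exact Finset.sum_eq_zero fun c0 _ => if_neg (fun h => hPZ h.1)
    refine Eq.trans (Finset.sum_congr rfl fun M' _ => hinner M') ?_
    rw [Finset.sum_add_distrib]
    have hT2 : (∑ M' : Fin r → Fin n → Bool,
        if pp M' ∧ zr M' = k then
          (w4 ^ rl M' * q4 ^ iv M') * (q4 ^ k * wqNum (n - (r - k))) else 0)
        = (PP.gbinom q4 r k * ∏ i ∈ Finset.range (r - k), wqNum (n - i))
            * (q4 ^ k * wqNum (n - (r - k))) := by
      rw [← IH k, Finset.sum_mul]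
      apply Finset.sum_congr rfl
      intro M' _
      rw [ite_mul, zero_mul]
    rw [hT2]
    cases k with
    | zero =>
      have hT1 : (∑ M' : Fin r → Fin n → Bool,
          if pp M' ∧ zr M' + 1 = 0 then w4 ^ rl M' * q4 ^ iv M' else 0) = 0 :=
        Finset.sum_eq_zero fun M' _ => if_neg (fun h => Nat.succ_ne_zero _ h.2)
      rw [hT1, gbinom_zero, gbinom_zero]
      simp only [Nat.sub_zero]
      rw [Finset.prod_range_succ]
      ring
    | succ k' =>
      have hT1 : (∑ M' : Fin r → Fin n → Bool,
          if pp M' ∧ zr M' + 1 = k' + 1 then w4 ^ rl M' * q4 ^ iv M' else 0)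
          = ∑ M' : Fin r → Fin n → Bool,
            if pp M' ∧ zr M' = k' then w4 ^ rl M' * q4 ^ iv M' else 0 :=
        Finset.sum_congr rfl fun M' _ =>
          if_congr (and_congr Iff.rfl ⟨fun h => Nat.succ_injective h, fun h => by rw [h]⟩) rfl rfl
      rw [hT1, IH k', gbinom_succ_succ]
      have e1 : r + 1 - (k' + 1) = r - k' := by omega
      rw [e1]
      by_cases hkr : k' + 1 ≤ r
      · have e2 : r - k' = (r - (k' + 1)) + 1 := by omega
        rw [e2, Finset.prod_range_succ]
        ring
      · have h0 : PP.gbinom q4 r (k' + 1) = 0 := gbinom_eq_zero q4 r (k' + 1) (by omega)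
        rw [h0]
        ring

end Aux

open scoped Classical in
theorem stmt4' (n k : ℕ) :
    (∑ M : Fin n → Fin n → Bool,
        if PP.isPP M ∧ PP.zeroRows M = k then w4 ^ PP.rlminStat M * q4 ^ PP.invStat M else 0)
    = PP.gbinom q4 n k * ∏ m ∈ Finset.Ico (k+1) (n+1), wqNum m := by
  have H := Aux.main n n k
  have h1 : ∀ M : Fin n → Fin n → Bool, PP.isPP M = Aux.pp M := fun _ => rfl
  have h2 : ∀ M : Fin n → Fin n → Bool, PP.zeroRows M = Aux.zr M := fun _ => rfl
  have h3 : ∀ M : Fin n → Fin n → Bool, PP.invStat M = Aux.iv M := fun _ => rfl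
  have h4 : ∀ M : Fin n → Fin n → Bool, PP.rlminStat M = Aux.rl M := fun _ => rfl
  simp only [h1, h2, h3, h4]
  rw [H]
  by_cases hk : k ≤ n
  · congr 1
    apply Finset.prod_nbij' (fun i => n - i) (fun m => n - m)
    · intro a ha
      rw [Finset.mem_range] at ha
      rw [Finset.mem_Ico]
      omega
    · intro a ha
      rw [Finset.mem_Ico] at ha
      rw [Finset.mem_range]
      omega
    · intro a ha
      rw [Finset.mem_range] at ha
      omega
    · intro a ha
      rw [Finset.mem_Ico] at ha
      omega
    · intro a _
      rfl
  · rw [Aux.gbinom_eq_zero q4 n k (by omega), zero_mul, zero_mul]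


open scoped Classical in
theorem stmt4 (n k : ℕ) :
    (∑ M : Fin n → Fin n → Bool,
        if PP.isPP M ∧ PP.zeroRows M = k then w4 ^ PP.rlminStat M * q4 ^ PP.invStat M else 0)
    = PP.gbinom q4 n k * ∏ m ∈ Finset.Ico (k+1) (n+1), wqNum m := stmt4' n k
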